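/- Let x_i → x in ℝ^{n−1}, v ∈ V with u(x_i)v ∈ V⁰ + V⁻ for all i, and δ_i → 0 a sequence of nonzero reals such that f = lim (x_i − x)/δ_i exists. Then u(f) stabilizes π₀(u(x)v), i.e. u(f)·π₀(u(x)v) = π₀(u(x)v). -/

import Mathlib

noncomputable section

open Matrix

/-- `X(ξ)`: first row `(0, ξ)`, zeros elsewhere. -/
def Xmat (m : ℕ) (ξ : Fin m → ℝ) : Matrix (Fin (m + 1)) (Fin (m + 1)) ℝ :=
  Matrix.of (Fin.cons (Fin.cons 0 ξ) 0)

/-- `u(ξ)`: unipotent matrix with `1`s on the diagonal and first row `(1, ξ)`. -/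
def uMat (m : ℕ) (ξ : Fin m → ℝ) : Matrix (Fin (m + 1)) (Fin (m + 1)) ℝ :=
  1 + Xmat m ξ

lemma Xmat_apply_succ (m : ℕ) (ξ : Fin m → ℝ) (i : Fin m) (j : Fin (m + 1)) :
    Xmat m ξ i.succ j = 0 := by
  simp [Xmat]

lemma uMat_det (m : ℕ) (ξ : Fin m → ℝ) : (uMat m ξ).det = 1 := by
  have h : (uMat m ξ).BlockTriangular id := by
    intro i j hij
    have hi : i ≠ 0 := by
      rintro rfl; exact Fin.not_lt_zero j hij
    obtain ⟨i', rfl⟩ := Fin.eq_succ_of_ne_zero hi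
    have hne : (i'.succ : Fin (m+1)) ≠ j := by
      intro h; subst h; exact lt_irrefl _ hij
    simp [uMat, Matrix.one_apply, hne, Xmat_apply_succ]
  rw [Matrix.det_of_upperTriangular h]
  have : ∀ i, uMat m ξ i i = 1 := by
    intro i
    rcases Fin.eq_zero_or_eq_succ i with rfl | ⟨i', rfl⟩
    · simp [uMat, Xmat, Matrix.one_apply]
    · simp [uMat, Matrix.one_apply, Xmat_apply_succ]
  simp [this]

lemma Xmat_mul_Xmat (m : ℕ) (ξ η : Fin m → ℝ) : Xmat m ξ * Xmat m η = 0 := by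
  ext i j
  rw [Matrix.mul_apply]
  refine Finset.sum_eq_zero fun k _ => ?_
  rcases Fin.eq_zero_or_eq_succ k with rfl | ⟨k', rfl⟩
  · rcases Fin.eq_zero_or_eq_succ i with rfl | ⟨i', rfl⟩
    · simp [Xmat]
    · simp [Xmat_apply_succ]
  · simp [Xmat_apply_succ]

lemma Xmat_add (m : ℕ) (ξ η : Fin m → ℝ) : Xmat m ξ + Xmat m η = Xmat m (ξ + η) := by
  ext i j
  rcases Fin.eq_zero_or_eq_succ i with rfl | ⟨i', rfl⟩
  · rcases Fin.eq_zero_or_eq_succ j with rfl | ⟨j', rfl⟩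
    · simp [Xmat]
    · simp [Xmat]
  · simp [Xmat_apply_succ]

lemma Xmat_zero (m : ℕ) : Xmat m 0 = 0 := by
  ext i j
  rcases Fin.eq_zero_or_eq_succ i with rfl | ⟨i', rfl⟩
  · rcases Fin.eq_zero_or_eq_succ j with rfl | ⟨j', rfl⟩ <;> simp [Xmat]
  · simp [Xmat_apply_succ]

lemma uMat_mul (m : ℕ) (ξ η : Fin m → ℝ) : uMat m ξ * uMat m η = uMat m (ξ + η) := by
  simp only [uMat, add_mul, mul_add, one_mul, mul_one, Xmat_mul_Xmat, add_zero]
  rw [add_assoc, Xmat_add]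

/-- `u(ξ)` as an element of `SL(n, ℝ)`. -/
def uSL (m : ℕ) (ξ : Fin m → ℝ) : Matrix.SpecialLinearGroup (Fin (m + 1)) ℝ :=
  ⟨uMat m ξ, uMat_det m ξ⟩

/-- The diagonal matrix `a_t = diag(e^{(n-1)t}, e^{-t}, …, e^{-t})`. -/
def aMat (m : ℕ) (t : ℝ) : Matrix (Fin (m + 1)) (Fin (m + 1)) ℝ :=
  Matrix.diagonal (Fin.cons (Real.exp (m * t)) fun _ => Real.exp (-t))

lemma aMat_det (m : ℕ) (t : ℝ) : (aMat m t).det = 1 := by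
  rw [aMat, Matrix.det_diagonal, Fin.prod_cons]
  simp only [Finset.prod_const, Finset.card_univ, Fintype.card_fin]
  rw [← Real.exp_nat_mul, ← Real.exp_add]
  ring_nf
  exact Real.exp_zero

/-- `a_t` as an element of `SL(n, ℝ)`. -/
def aSL (m : ℕ) (t : ℝ) : Matrix.SpecialLinearGroup (Fin (m + 1)) ℝ :=
  ⟨aMat m t, aMat_det m t⟩

lemma aMat_mul_Xmat (m : ℕ) (t : ℝ) (ξ : Fin m → ℝ) :
    aMat m t * Xmat m ξ = Xmat m (Real.exp (((m : ℝ) + 1) * t) • ξ) * aMat m t := by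
  ext i j
  rw [aMat, Matrix.diagonal_mul, Matrix.mul_diagonal]
  rcases Fin.eq_zero_or_eq_succ i with rfl | ⟨i', rfl⟩
  · rcases Fin.eq_zero_or_eq_succ j with rfl | ⟨j', rfl⟩
    · simp [Xmat]
    · simp only [Fin.cons_zero, Fin.cons_succ, Xmat, Matrix.of_apply, Pi.smul_apply,
        smul_eq_mul]
      rw [mul_comm (Real.exp ((↑m+1)*t) * ξ j'), ← mul_assoc, ← Real.exp_add]
      ring_nf
  · simp [Xmat_apply_succ]

lemma aMat_mul_uMat (m : ℕ) (t : ℝ) (ξ : Fin m → ℝ) :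
    aMat m t * uMat m ξ = uMat m (Real.exp (((m : ℝ) + 1) * t) • ξ) * aMat m t := by
  simp only [uMat, mul_add, add_mul, mul_one, one_mul, aMat_mul_Xmat]

lemma uSL_mul (m : ℕ) (ξ η : Fin m → ℝ) : uSL m ξ * uSL m η = uSL m (ξ + η) :=
  Subtype.ext (uMat_mul m ξ η)

lemma uSL_zero (m : ℕ) : uSL m 0 = 1 := by
  apply Subtype.ext
  show uMat m 0 = (1 : Matrix.SpecialLinearGroup (Fin (m+1)) ℝ)
  rw [uMat, Xmat_zero, add_zero]
  rfl

lemma aSL_mul_uSL (m : ℕ) (t : ℝ) (ξ : Fin m → ℝ) :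
    aSL m t * uSL m ξ = uSL m (Real.exp (((m : ℝ) + 1) * t) • ξ) * aSL m t :=
  Subtype.ext (aMat_mul_uMat m t ξ)

/-- Topology on `SL(n, ℝ)`, induced from the space of matrices. -/
instance SLtop (m : ℕ) : TopologicalSpace (Matrix.SpecialLinearGroup (Fin (m + 1)) ℝ) :=
  TopologicalSpace.induced
    (fun g => (g : Matrix (Fin (m + 1)) (Fin (m + 1)) ℝ)) inferInstance

lemma continuous_uSL (m : ℕ) : Continuous (uSL m) := by
  rw [continuous_induced_rng]
  apply continuous_matrix
  intro i j
  rcases Fin.eq_zero_or_eq_succ i with rfl | ⟨i', rfl⟩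
  · rcases Fin.eq_zero_or_eq_succ j with rfl | ⟨j', rfl⟩
    · simpa [uSL, uMat, Xmat, Matrix.one_apply] using continuous_const
    · have : (fun ξ : Fin m → ℝ => uMat m ξ 0 j'.succ) = fun ξ => ξ j' := by
        funext ξ
        simp [uMat, Xmat, Matrix.one_apply, (Fin.succ_ne_zero j').symm]
      show Continuous fun ξ : Fin m → ℝ => uMat m ξ 0 j'.succ
      rw [this]; exact continuous_apply j'
  · have : (fun ξ : Fin m → ℝ => uMat m ξ i'.succ j) = fun _ => (1 : Matrix (Fin (m+1)) (Fin (m+1)) ℝ) i'.succ j := by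
      funext ξ
      simp [uMat, Xmat_apply_succ]
    show Continuous fun ξ : Fin m → ℝ => uMat m ξ i'.succ j
    rw [this]; exact continuous_const

variable {V : Type*} [AddCommGroup V] [Module ℝ V]

/-- The weight space `V^μ` of the one-parameter diagonal group `{a_t}` acting through
the representation `ρ`: the set of `v` with `ρ(a_t) v = e^{μ t} v` for all `t`. -/
def wtSpace (m : ℕ)
    (ρ : Matrix.SpecialLinearGroup (Fin (m + 1)) ℝ →* Module.End ℝ V) (μ : ℝ) :
    Submodule ℝ V :=
  ⨅ t : ℝ, Module.End.eigenspace (ρ (aSL m t)) (Real.exp (μ * t))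

lemma wtSpace_apply {V : Type*} [AddCommGroup V] [Module ℝ V] {m : ℕ}
    {ρ : Matrix.SpecialLinearGroup (Fin (m + 1)) ℝ →* Module.End ℝ V} {μ : ℝ} {u : V}
    (hu : u ∈ wtSpace m ρ μ) (t : ℝ) :
    ρ (aSL m t) u = Real.exp (μ * t) • u := by
  have := Submodule.mem_iInf (fun t : ℝ => Module.End.eigenspace (ρ (aSL m t)) (Real.exp (μ * t))) |>.mp hu t
  rwa [Module.End.mem_eigenspace_iff] at this

open Filter Topology in
lemma tendsto_aSL_of_mem_W {m : ℕ}
    {V : Type*} [NormedAddCommGroup V] [NormedSpace ℝ V] [FiniteDimensional ℝ V]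
    (ρ : Matrix.SpecialLinearGroup (Fin (m + 1)) ℝ →* Module.End ℝ V)
    (π₀ : V →ₗ[ℝ] V)
    (hπ₀ : ∀ w ∈ wtSpace m ρ 0, π₀ w = w)
    (hπ : ∀ μ : ℝ, μ ≠ 0 → ∀ w ∈ wtSpace m ρ μ, π₀ w = 0)
    {ι : Type*} {l : Filter ι}
    (t : ι → ℝ) (ht : Tendsto t l atTop)
    (ω : ι → V) (w : V)
    (hωW : ∀ i, ω i ∈ wtSpace m ρ 0 ⊔ ⨆ μ ∈ Set.Iio (0 : ℝ), wtSpace m ρ μ)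
    (hwW : w ∈ wtSpace m ρ 0 ⊔ ⨆ μ ∈ Set.Iio (0 : ℝ), wtSpace m ρ μ)
    (hω : Tendsto ω l (𝓝 w)) :
    Tendsto (fun i => ρ (aSL m (t i)) (ω i)) l (𝓝 (π₀ w)) := by
  set W : Submodule ℝ V := wtSpace m ρ 0 ⊔ ⨆ μ ∈ Set.Iio (0 : ℝ), wtSpace m ρ μ with hWdef
  set s : Set V := (wtSpace m ρ 0 : Set V) ∪ ⋃ μ ∈ Set.Iio (0 : ℝ), (wtSpace m ρ μ : Set V)
    with hsdef
  have hspan : Submodule.span ℝ s = W := by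
    rw [hsdef, Submodule.span_union, Submodule.span_eq, Submodule.span_iUnion₂]
    simp_rw [Submodule.span_eq]
    rfl
  obtain ⟨b, hbs, hbspan, hbind⟩ := exists_linearIndependent ℝ s
  have hbfin : b.Finite := hbind.setFinite
  haveI : Fintype b := hbfin.fintype
  have hchoose : ∀ j : b, ∃ μ : ℝ, μ ≤ 0 ∧ (j : V) ∈ wtSpace m ρ μ := by
    intro j
    rcases hbs j.2 with h | h
    · exact ⟨0, le_refl 0, h⟩
    · simp only [Set.mem_iUnion] at h
      obtain ⟨μ, hμ, hmem⟩ := h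
      exact ⟨μ, le_of_lt hμ, hmem⟩
  choose μj hμj hjmem using hchoose
  have hspanb : Submodule.span ℝ (Set.range (Subtype.val : b → V)) = W := by
    rw [Subtype.range_coe, hbspan, hspan]
  let B : Module.Basis b ℝ W := (Module.Basis.span hbind).map (LinearEquiv.ofEq _ _ hspanb)
  have hBj : ∀ j : b, (B j : V) = (j : V) := by
    intro j
    simp only [B, Module.Basis.map_apply, LinearEquiv.coe_ofEq_apply, Module.Basis.span_apply]
  let ω' : ι → W := fun i => ⟨ω i, hωW i⟩
  let w' : W := ⟨w, hwW⟩
  have hω' : Tendsto ω' l (𝓝 w') := tendsto_subtype_rng.2 hω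
  have hsum : ∀ u : W, (u : V) = ∑ j : b, (B.repr u j) • (B j : V) := by
    intro u
    conv_lhs => rw [← B.sum_repr u]
    push_cast
    rfl
  have hexp : ∀ i, ρ (aSL m (t i)) (ω i) =
      ∑ j : b, (B.repr (ω' i) j) • (Real.exp (μj j * t i) • (B j : V)) := by
    intro i
    have h1 : ω i = ∑ j : b, (B.repr (ω' i) j) • (B j : V) := hsum (ω' i)
    rw [h1, map_sum]
    refine Finset.sum_congr rfl fun j _ => ?_
    rw [LinearMap.map_smul]
    congr 1
    rw [wtSpace_apply (hBj j ▸ hjmem j)]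
  have hlim : Tendsto (fun i => ∑ j : b, (B.repr (ω' i) j) • (Real.exp (μj j * t i) • (B j : V)))
      l (𝓝 (∑ j : b, (B.repr w' j) • (if μj j = 0 then (B j : V) else 0))) := by
    apply tendsto_finset_sum
    intro j _
    apply Tendsto.smul
    · have hc : Continuous (B.coord j) := (B.coord j).continuous_of_finiteDimensional
      have := (hc.tendsto w').comp hω'
      simpa [Module.Basis.coord_apply, Function.comp_def] using this
    · by_cases h0 : μj j = 0
      · simp only [h0, if_pos, zero_mul, Real.exp_zero, one_smul]
        exact tendsto_const_nhds
      · rw [if_neg h0]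
        have hneg : μj j < 0 := lt_of_le_of_ne (hμj j) h0
        have h2 : Tendsto (fun i => μj j * t i) l atBot := by
          have h3 : Tendsto (fun i => (-μj j) * t i) l atTop :=
            ht.const_mul_atTop (by linarith)
          have := tendsto_neg_atTop_atBot.comp h3
          simpa [Function.comp_def, neg_mul] using this
        have h4 : Tendsto (fun i => Real.exp (μj j * t i)) l (𝓝 0) :=
          Real.tendsto_exp_atBot.comp h2
        simpa using h4.smul_const (B j : V)
  have hπw : π₀ w = ∑ j : b, (B.repr w' j) • (if μj j = 0 then (B j : V) else 0) := by
    conv_lhs => rw [show w = (w' : V) from rfl, hsum w']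
    rw [map_sum]
    refine Finset.sum_congr rfl fun j _ => ?_
    rw [LinearMap.map_smul]
    congr 1
    by_cases h0 : μj j = 0
    · rw [if_pos h0]
      exact hπ₀ _ (by rw [hBj]; exact h0 ▸ hjmem j)
    · rw [if_neg h0]
      exact hπ _ h0 _ (by rw [hBj]; exact hjmem j)
  rw [hπw]
  exact (tendsto_congr hexp).2 hlim


open Filter Topology in
/-- Lemma 4.5 (lema:accu) of the paper. Let `x_i → x` in `ℝ^{n-1}`, let `v ∈ V`
satisfy `u(x_i) v ∈ V⁰ + V⁻` for all `i`, and let `δ_i → 0` be nonzero reals such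
that `f = lim (x_i - x)/δ_i` exists. Then `u(f)` stabilizes `π₀(u(x) v)`. -/
theorem uf_stabilizes_pi0 {m : ℕ} (hm : 1 ≤ m)
    {V : Type*} [NormedAddCommGroup V] [NormedSpace ℝ V] [FiniteDimensional ℝ V]
    (ρ : Matrix.SpecialLinearGroup (Fin (m + 1)) ℝ →* Module.End ℝ V)
    (hcont : ∀ v : V, Continuous fun g => ρ g v)
    (hss : (⨆ μ : ℝ, wtSpace m ρ μ) = ⊤)
    (π₀ : V →ₗ[ℝ] V)
    (hπ₀ : ∀ w ∈ wtSpace m ρ 0, π₀ w = w)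
    (hπ : ∀ μ : ℝ, μ ≠ 0 → ∀ w ∈ wtSpace m ρ μ, π₀ w = 0)
    (x : ℕ → Fin m → ℝ) (x₀ : Fin m → ℝ)
    (hx : Tendsto x atTop (𝓝 x₀))
    (v : V)
    (hneg : ∀ i : ℕ,
      ρ (uSL m (x i)) v ∈ wtSpace m ρ 0 ⊔ ⨆ μ ∈ Set.Iio (0 : ℝ), wtSpace m ρ μ)
    (δ : ℕ → ℝ) (hδ0 : ∀ i, δ i ≠ 0) (hδ : Tendsto δ atTop (𝓝 0))
    (f : Fin m → ℝ)
    (hf : Tendsto (fun i => (δ i)⁻¹ • (x i - x₀)) atTop (𝓝 f)) :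
    ρ (uSL m f) (π₀ (ρ (uSL m x₀) v)) = π₀ (ρ (uSL m x₀) v) := by
  classical
  set w : V := ρ (uSL m x₀) v with hwdef
  have hΦ : Continuous (fun g : Matrix.SpecialLinearGroup (Fin (m+1)) ℝ =>
      LinearMap.toContinuousLinearMap (ρ g)) := by
    rw [continuous_clm_apply]
    intro y
    simpa using hcont y
  have hwlim : Tendsto (fun i => ρ (uSL m (x i)) v) atTop (𝓝 w) :=
    ((hcont v).tendsto _).comp (((continuous_uSL m).tendsto x₀).comp hx)
  have hWclosed : IsClosed
      ((wtSpace m ρ 0 ⊔ ⨆ μ ∈ Set.Iio (0:ℝ), wtSpace m ρ μ : Submodule ℝ V) : Set V) :=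
    Submodule.closed_of_finiteDimensional _
  have hwW : w ∈ wtSpace m ρ 0 ⊔ ⨆ μ ∈ Set.Iio (0:ℝ), wtSpace m ρ μ :=
    hWclosed.mem_of_tendsto hwlim (Filter.Eventually.of_forall hneg)
  have key : ∀ ε : ℝ, (ε = 1 ∨ ε = -1) →
      ∀ l : Filter ℕ, l.NeBot → l ≤ atTop → (∀ᶠ i in l, 0 < ε * δ i) →
      ρ (uSL m (ε • f)) (π₀ w) = π₀ w := by
    intro ε hε l hl hle hpos
    haveI := hl
    have hεinv : ε⁻¹ = ε := by rcases hε with rfl | rfl <;> norm_num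
    set t : ℕ → ℝ := fun i => -Real.log (ε * δ i) / ((m : ℝ) + 1) with htdef
    have hm1 : (0:ℝ) < (m:ℝ) + 1 := by positivity
    have hεδ : Tendsto (fun i => ε * δ i) l (𝓝[>] (0:ℝ)) := by
      rw [tendsto_nhdsWithin_iff]
      refine ⟨?_, hpos⟩
      have := (hδ.const_mul ε).mono_left hle
      simpa using this
    have ht : Tendsto t l atTop := by
      have h1 : Tendsto (fun i => Real.log (ε * δ i)) l atBot :=
        Real.tendsto_log_nhdsGT_zero.comp hεδ
      have h2 : Tendsto (fun i => -Real.log (ε * δ i)) l atTop := by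
        have := tendsto_neg_atBot_atTop.comp h1
        simpa [Function.comp_def] using this
      exact h2.atTop_div_const hm1
    have hexp : ∀ᶠ i in l, Real.exp (((m:ℝ)+1) * t i) = (ε * δ i)⁻¹ := by
      filter_upwards [hpos] with i hi
      have h3 : ((m:ℝ)+1) * t i = -Real.log (ε * δ i) := by
        rw [htdef]
        field_simp
      rw [h3, Real.exp_neg, Real.exp_log hi]
    set ξ : ℕ → Fin m → ℝ := fun i => Real.exp (((m:ℝ)+1) * t i) • (x i - x₀) with hξdef
    have hξlim : Tendsto ξ l (𝓝 (ε • f)) := by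
      have h2 : Tendsto (fun i => ε • ((δ i)⁻¹ • (x i - x₀))) l (𝓝 (ε • f)) :=
        (hf.mono_left hle).const_smul ε
      refine Tendsto.congr' ?_ h2
      filter_upwards [hexp] with i hi
      show ε • ((δ i)⁻¹ • (x i - x₀)) = ξ i
      rw [hξdef]
      show ε • ((δ i)⁻¹ • (x i - x₀)) = Real.exp (((m:ℝ)+1) * t i) • (x i - x₀)
      rw [hi, mul_inv, hεinv, smul_smul]
    have hgrp : ∀ i, ρ (aSL m (t i)) (ρ (uSL m (x i)) v) =
        ρ (uSL m (ξ i)) (ρ (aSL m (t i)) w) := by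
      intro i
      have h2 : uSL m (x i) = uSL m (x i - x₀) * uSL m x₀ := by
        rw [uSL_mul, sub_add_cancel]
      have h1 : aSL m (t i) * uSL m (x i) = uSL m (ξ i) * (aSL m (t i) * uSL m x₀) := by
        rw [h2, ← mul_assoc, aSL_mul_uSL, mul_assoc]
      calc ρ (aSL m (t i)) (ρ (uSL m (x i)) v)
          = ρ (aSL m (t i) * uSL m (x i)) v := by
            simp only [_root_.map_mul, Module.End.mul_apply]
        _ = ρ (uSL m (ξ i)) (ρ (aSL m (t i)) w) := by
            rw [h1]
            simp only [_root_.map_mul, Module.End.mul_apply, hwdef]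
    have hLHS : Tendsto (fun i => ρ (aSL m (t i)) (ρ (uSL m (x i)) v)) l (𝓝 (π₀ w)) :=
      tendsto_aSL_of_mem_W ρ π₀ hπ₀ hπ t ht _ w hneg hwW (hwlim.mono_left hle)
    have hinner : Tendsto (fun i => ρ (aSL m (t i)) w) l (𝓝 (π₀ w)) :=
      tendsto_aSL_of_mem_W ρ π₀ hπ₀ hπ t ht (fun _ => w) w (fun _ => hwW) hwW
        tendsto_const_nhds
    have hRHS : Tendsto (fun i => ρ (uSL m (ξ i)) (ρ (aSL m (t i)) w)) l
        (𝓝 (ρ (uSL m (ε • f)) (π₀ w))) := by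
      have hg : Tendsto (fun i => LinearMap.toContinuousLinearMap (ρ (uSL m (ξ i)))) l
          (𝓝 (LinearMap.toContinuousLinearMap (ρ (uSL m (ε • f))))) :=
        (hΦ.tendsto _).comp (((continuous_uSL m).tendsto _).comp hξlim)
      have happ : Continuous (fun p : (V →L[ℝ] V) × V => p.1 p.2) :=
        isBoundedBilinearMap_apply.continuous
      have := (happ.tendsto _).comp (hg.prodMk_nhds hinner)
      simpa [Function.comp_def] using this
    exact tendsto_nhds_unique ((tendsto_congr hgrp).2 hRHS) hLHS
  set S1 : Set ℕ := {i | 0 < δ i} with hS1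
  set S2 : Set ℕ := {i | δ i < 0} with hS2
  have hcover : S1 ∪ S2 = Set.univ := by
    ext i
    simp only [hS1, hS2, Set.mem_union, Set.mem_setOf_eq, Set.mem_univ, iff_true]
    exact ((hδ0 i).lt_or_gt).symm
  have hsplit : (atTop ⊓ 𝓟 S1) ⊔ (atTop ⊓ 𝓟 S2) = (atTop : Filter ℕ) := by
    rw [← inf_sup_left, sup_principal, hcover, principal_univ, inf_top_eq]
  have hne : (atTop ⊓ 𝓟 S1).NeBot ∨ (atTop ⊓ 𝓟 S2).NeBot := by
    rw [← sup_neBot, hsplit]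
    infer_instance
  rcases hne with h | h
  · have h1 := key 1 (Or.inl rfl) (atTop ⊓ 𝓟 S1) h inf_le_left ?_
    · simpa using h1
    · refine eventually_inf_principal.2 (Filter.Eventually.of_forall fun i hi => ?_)
      simpa using (show 0 < δ i from hi)
  · have h1 := key (-1) (Or.inr rfl) (atTop ⊓ 𝓟 S2) h inf_le_left ?_
    · have h2 : ρ (uSL m f) (ρ (uSL m ((-1:ℝ) • f)) (π₀ w)) = π₀ w := by
        rw [← Module.End.mul_apply, ← _root_.map_mul, uSL_mul]
        have h3 : f + (-1:ℝ) • f = 0 := by simp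
        rw [h3, uSL_zero, _root_.map_one, Module.End.one_apply]
      rw [h1] at h2
      exact h2
    · refine eventually_inf_principal.2 (Filter.Eventually.of_forall fun i hi => ?_)
      simpa using (show δ i < 0 from hi)
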